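/- Let X be uniformly distributed on a set D ⊆ {0,1}^n with |D| ≥ 2^{n−t}, and let f : D → {0,1}. Then Σ_{i=1}^n I(X_i; f(X)) ≤ t + 1, and hence E_{i ← [n]}[I(X_i; f(X))] ≤ (t+1)/n. -/

import Mathlib

open Finset

set_option maxHeartbeats 1000000

/-- Shannon entropy (base 2) of a finitely supported distribution given by its
probability mass function. -/
noncomputable def ent {α : Type*} [Fintype α] (p : α → ℝ) : ℝ :=
  ∑ a, -(p a * Real.logb 2 (p a))

/-- Gibbs-type inequality: if `∑ w z ≤ ∑ w` with `w` nonnegative and `z` positive on the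
support of `w`, then `∑ w logb 2 z ≤ 0`. -/
private lemma gibbs {α : Type*} (s : Finset α) (w z : α → ℝ)
    (hw0 : ∀ a ∈ s, 0 ≤ w a)
    (hz : ∀ a ∈ s, w a ≠ 0 → 0 < z a)
    (hzs : ∑ a ∈ s, w a * z a ≤ ∑ a ∈ s, w a) :
    ∑ a ∈ s, w a * Real.logb 2 (z a) ≤ 0 := by
  have hlog2 : 0 < Real.log 2 := Real.log_pos one_lt_two
  have h1 : ∑ a ∈ s, w a * Real.log (z a) ≤ 0 := by
    have key : ∀ a ∈ s, w a * Real.log (z a) ≤ w a * (z a - 1) := by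
      intro a ha
      rcases eq_or_ne (w a) 0 with h | h
      · simp [h]
      · exact mul_le_mul_of_nonneg_left (Real.log_le_sub_one_of_pos (hz a ha h)) (hw0 a ha)
    have h2 : ∑ a ∈ s, w a * (z a - 1) = (∑ a ∈ s, w a * z a) - ∑ a ∈ s, w a := by
      rw [← Finset.sum_sub_distrib]
      exact Finset.sum_congr rfl fun a _ => by ring
    calc ∑ a ∈ s, w a * Real.log (z a) ≤ ∑ a ∈ s, w a * (z a - 1) := Finset.sum_le_sum key
      _ = (∑ a ∈ s, w a * z a) - ∑ a ∈ s, w a := h2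
      _ ≤ 0 := by linarith
  have heq : ∑ a ∈ s, w a * Real.logb 2 (z a)
      = (∑ a ∈ s, w a * Real.log (z a)) / Real.log 2 := by
    rw [Finset.sum_div]
    exact Finset.sum_congr rfl fun a _ => by rw [Real.logb]; ring
  rw [heq]
  exact div_nonpos_of_nonpos_of_nonneg h1 hlog2.le

/-- Fibers of a map partition the cardinality. -/
private lemma fiber_card {α β : Type*} [DecidableEq β] [Fintype β] (S : Finset α) (g : α → β) :
    ∑ b, ((S.filter fun x => g x = b).card : ℝ) = S.card := by
  have := Finset.sum_fiberwise S g (fun _ => (1 : ℝ))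
  simpa using this

/-- The entropy of a distribution on `Bool` is at most `1`. -/
private lemma ent_bool_le_one (q : Bool → ℝ) (h0 : ∀ b, 0 ≤ q b) (h1 : ∑ b, q b = 1) :
    ent q ≤ 1 := by
  have hg : ∑ b, q b * Real.logb 2 (1 / (2 * q b)) ≤ 0 := by
    apply gibbs Finset.univ q (fun b => 1 / (2 * q b)) (fun b _ => h0 b)
    · intro b _ hb
      have hq : 0 < q b := lt_of_le_of_ne (h0 b) (Ne.symm hb)
      positivity
    · rw [h1]
      have hterm : ∀ b, q b * (1 / (2 * q b)) ≤ 1 / 2 := by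
        intro b
        rcases eq_or_ne (q b) 0 with h | h
        · simp [h]
        · have : q b * (1 / (2 * q b)) = 1 / 2 := by field_simp
          rw [this]
      calc ∑ b, q b * (1 / (2 * q b)) ≤ ∑ _b : Bool, (1 / 2 : ℝ) :=
            Finset.sum_le_sum fun b _ => hterm b
        _ = 1 := by simp
  have he : ∀ b, q b * Real.logb 2 (1 / (2 * q b)) = -(q b * Real.logb 2 (q b)) - q b := by
    intro b
    rcases eq_or_ne (q b) 0 with h | h
    · simp [h]
    · rw [one_div, Real.logb_inv, Real.logb_mul two_ne_zero h,
        Real.logb_self_eq_one one_lt_two]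
      ring
  rw [Finset.sum_congr rfl (fun b _ => he b), Finset.sum_sub_distrib, h1] at hg
  have : ent q = ∑ b, -(q b * Real.logb 2 (q b)) := rfl
  linarith [hg, this ▸ hg]

/-- Subadditivity for a uniform distribution on `S ⊆ Bool^n`:
`log₂ |S| ≤ ∑ᵢ H(Xᵢ)`. -/
private lemma subadd {n : ℕ} (S : Finset (Fin n → Bool)) (hS : S.Nonempty) :
    Real.logb 2 S.card ≤
      ∑ i : Fin n, ent (fun b => ((S.filter fun x => x i = b).card : ℝ) / S.card) := by
  have hc : (0 : ℝ) < S.card := by exact_mod_cast Finset.card_pos.mpr hS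
  set p : Fin n → Bool → ℝ :=
    fun i b => ((S.filter fun x => x i = b).card : ℝ) / S.card with hp
  have hp0 : ∀ i b, 0 ≤ p i b := fun i b => by positivity
  have hpsum : ∀ i, ∑ b, p i b = 1 := by
    intro i
    rw [hp, ← Finset.sum_div, fiber_card S (fun x => x i), div_self hc.ne']
  have hpx : ∀ i, ∀ x ∈ S, 0 < p i (x i) := by
    intro i x hx
    apply div_pos _ hc
    have hmem : x ∈ S.filter (fun z => z i = x i) := Finset.mem_filter.mpr ⟨hx, rfl⟩
    have hcard : 0 < (S.filter (fun z => z i = x i)).card := Finset.card_pos.mpr ⟨x, hmem⟩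
    exact_mod_cast hcard
  have hg : ∑ x ∈ S, ((S.card : ℝ))⁻¹ * Real.logb 2 (S.card * ∏ i, p i (x i)) ≤ 0 := by
    apply gibbs S _ _ (fun a _ => by positivity)
    · intro x hx _
      exact mul_pos hc (Finset.prod_pos fun i _ => hpx i x hx)
    · have hsum1 : ∑ x ∈ S, ((S.card : ℝ))⁻¹ * ((S.card : ℝ) * ∏ i, p i (x i))
          = ∑ x ∈ S, ∏ i, p i (x i) := by
        refine Finset.sum_congr rfl fun x _ => ?_
        field_simp
      rw [hsum1]
      have h2 : ∑ x ∈ S, ∏ i, p i (x i) ≤ ∑ x : Fin n → Bool, ∏ i, p i (x i) := by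
        apply Finset.sum_le_sum_of_subset_of_nonneg (Finset.subset_univ S)
        intro x _ _
        exact Finset.prod_nonneg fun i _ => hp0 i (x i)
      have h3 : ∑ x : Fin n → Bool, ∏ i, p i (x i) = 1 := by
        rw [← Fintype.prod_sum p]
        exact Finset.prod_eq_one fun i _ => hpsum i
      have h4 : ∑ _x ∈ S, ((S.card : ℝ))⁻¹ = 1 := by
        rw [Finset.sum_const, nsmul_eq_mul, mul_inv_cancel₀ hc.ne']
      rw [h4]
      linarith
  -- rewrite the logarithm of the product
  have hlogz : ∀ x ∈ S, Real.logb 2 ((S.card : ℝ) * ∏ i, p i (x i))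
      = Real.logb 2 S.card + ∑ i, Real.logb 2 (p i (x i)) := by
    intro x hx
    rw [Real.logb_mul hc.ne' (Finset.prod_pos fun i _ => hpx i x hx).ne',
      Real.logb_prod _ _ (fun i _ => (hpx i x hx).ne')]
  rw [Finset.sum_congr rfl (fun x hx => by rw [hlogz x hx])] at hg
  have hg2 : ∑ x ∈ S, ((S.card : ℝ))⁻¹ *
      (Real.logb 2 S.card + ∑ i, Real.logb 2 (p i (x i)))
      = Real.logb 2 S.card + ∑ i : Fin n, ∑ x ∈ S, ((S.card : ℝ))⁻¹ * Real.logb 2 (p i (x i)) := by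
    have : ∀ x ∈ S, ((S.card : ℝ))⁻¹ * (Real.logb 2 S.card + ∑ i, Real.logb 2 (p i (x i)))
        = ((S.card : ℝ))⁻¹ * Real.logb 2 S.card
          + ∑ i, ((S.card : ℝ))⁻¹ * Real.logb 2 (p i (x i)) := by
      intro x _
      rw [mul_add, Finset.mul_sum]
    rw [Finset.sum_congr rfl this, Finset.sum_add_distrib, Finset.sum_comm,
      Finset.sum_const, nsmul_eq_mul, ← mul_assoc, mul_inv_cancel₀ hc.ne', one_mul]
  rw [hg2] at hg
  -- identify the inner sums with entropies
  have hinner : ∀ i : Fin n, ∑ x ∈ S, ((S.card : ℝ))⁻¹ * Real.logb 2 (p i (x i))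
      = -(ent (p i)) := by
    intro i
    have hfib := Finset.sum_fiberwise' S (fun x => x i)
      (fun b => ((S.card : ℝ))⁻¹ * Real.logb 2 (p i b))
    rw [← hfib]
    have : ∀ b : Bool, ∑ _x ∈ S.filter (fun x => x i = b),
        ((S.card : ℝ))⁻¹ * Real.logb 2 (p i b)
        = p i b * Real.logb 2 (p i b) := by
      intro b
      rw [Finset.sum_const, nsmul_eq_mul, hp]
      field_simp
    rw [Finset.sum_congr rfl (fun b _ => this b), ent]
    simp
  rw [Finset.sum_congr rfl (fun i _ => hinner i)] at hg
  have : ∑ i : Fin n, -(ent (p i)) = -∑ i : Fin n, ent (p i) := by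
    rw [Finset.sum_neg_distrib]
  rw [this] at hg
  linarith

/-- Chain-rule identity for the entropy contribution of one fiber, over `Bool`. -/
private lemma chain_bool (N c : ℝ) (hN : 0 < N) (a : Bool → ℝ)
    (ha0 : ∀ b, 0 ≤ a b) (hasum : ∑ b, a b = c) :
    ∑ b, -(a b / N * Real.logb 2 (a b / N)) =
      -(c / N * Real.logb 2 (c / N))
        + c / N * ∑ b, -(a b / c * Real.logb 2 (a b / c)) := by
  have hc0 : 0 ≤ c := by
    rw [← hasum]
    exact Finset.sum_nonneg fun b _ => ha0 b
  rcases eq_or_lt_of_le hc0 with h | hcpos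
  · -- c = 0 : every a b = 0
    have h0 : c = 0 := h.symm
    have hab : ∀ b, a b = 0 := by
      intro b
      have hsum : a true + a false = 0 := by
        have h2 := hasum
        rw [Fintype.sum_bool] at h2
        linarith
      cases b <;> linarith [ha0 true, ha0 false]
    simp [hab, h0]
  · have per : ∀ b, -(a b / N * Real.logb 2 (a b / N)) =
        -(a b / N * Real.logb 2 (c / N))
          + c / N * -(a b / c * Real.logb 2 (a b / c)) := by
      intro b
      rcases eq_or_ne (a b) 0 with h | h
      · simp [h]
      · have habpos : 0 < a b := lt_of_le_of_ne (ha0 b) (Ne.symm h)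
        have h1 : a b / N = c / N * (a b / c) := by
          field_simp
        rw [h1, Real.logb_mul (by positivity) (by positivity)]
        field_simp
        ring
    rw [Finset.sum_congr rfl (fun b _ => per b), Finset.sum_add_distrib, ← Finset.mul_sum]
    congr 1
    have : ∑ b, -(a b / N * Real.logb 2 (c / N))
        = -((∑ b, a b) / N * Real.logb 2 (c / N)) := by
      rw [Finset.sum_div, Finset.sum_mul, Finset.sum_neg_distrib]
    rw [this, hasum]

/-- for `X` uniform on `D ⊆ {0,1}^n` with `|D| ≥ 2^{n−t}` and Boolean `f`,
`Σ_{i=1}^n I(X_i; f(X)) ≤ t + 1`, hence `E_i[I(X_i; f(X))] ≤ (t+1)/n`. -/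
theorem stmt14 (n t : ℕ) (ht : t ≤ n) (hn : 0 < n)
    (D : Finset (Fin n → Bool)) (hD : 2 ^ (n - t) ≤ D.card)
    (f : (Fin n → Bool) → Bool)
    (I : Fin n → ℝ)
    (hI : ∀ i, I i =
      ent (fun b : Bool => ((D.filter (fun x => x i = b)).card : ℝ) / D.card)
      + ent (fun y : Bool => ((D.filter (fun x => f x = y)).card : ℝ) / D.card)
      - ent (fun w : Bool × Bool =>
          ((D.filter (fun x => x i = w.1 ∧ f x = w.2)).card : ℝ) / D.card)) :
    (∑ i : Fin n, I i ≤ (t : ℝ) + 1) ∧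
    ((1 / (n : ℝ)) * ∑ i : Fin n, I i ≤ ((t : ℝ) + 1) / n) := by
  have hN0 : 0 < D.card := lt_of_lt_of_le (Nat.pow_pos (by norm_num)) hD
  have hN : (0 : ℝ) < (D.card : ℝ) := by exact_mod_cast hN0
  set S : Bool → Finset (Fin n → Bool) := fun y => D.filter (fun x => f x = y) with hSdef
  set q : Bool → ℝ := fun y => ((S y).card : ℝ) / D.card with hqdef
  have hq0 : ∀ y, 0 ≤ q y := fun y => by positivity
  have hqsum : ∑ y, q y = 1 := by
    rw [hqdef, ← Finset.sum_div, fiber_card D f, div_self hN.ne']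
  have hentq : ent q ≤ 1 := ent_bool_le_one q hq0 hqsum
  -- filters commute
  have hff : ∀ (i : Fin n) (b y : Bool),
      D.filter (fun x => x i = b ∧ f x = y) = (S y).filter (fun x => x i = b) := by
    intro i b y
    rw [hSdef, Finset.filter_filter]
    exact Finset.filter_congr fun x _ => by tauto
  -- conditional entropies
  set s : Fin n → Bool → Bool → ℝ :=
    fun i y b => (((S y).filter fun x => x i = b).card : ℝ) / (S y).card with hsdef
  -- Claim 1: chain rule
  have claim1 : ∀ i : Fin n,
      ent (fun w : Bool × Bool =>
        ((D.filter (fun x => x i = w.1 ∧ f x = w.2)).card : ℝ) / D.card)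
      = ent q + ∑ y, q y * ent (s i y) := by
    intro i
    have hrew : ent (fun w : Bool × Bool =>
        ((D.filter (fun x => x i = w.1 ∧ f x = w.2)).card : ℝ) / D.card)
        = ∑ y, ∑ b, -((((S y).filter fun x => x i = b).card : ℝ) / D.card *
            Real.logb 2 ((((S y).filter fun x => x i = b).card : ℝ) / D.card)) := by
      rw [ent, Fintype.sum_prod_type, Finset.sum_comm]
      exact Finset.sum_congr rfl fun y _ => Finset.sum_congr rfl fun b _ => by rw [hff i b y]
    rw [hrew, ent]
    rw [← Finset.sum_add_distrib]
    refine Finset.sum_congr rfl fun y _ => ?_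
    have hfib : ∑ b, (((S y).filter fun x => x i = b).card : ℝ) = ((S y).card : ℝ) :=
      fiber_card (S y) (fun x => x i)
    have := chain_bool (D.card) ((S y).card) hN
      (fun b => (((S y).filter fun x => x i = b).card : ℝ))
      (fun b => Nat.cast_nonneg _) (by exact hfib)
    rw [this]
    rfl
  -- Claim 2: subadditivity per fiber
  have claim2 : ∀ y, q y * Real.logb 2 ((S y).card : ℝ) ≤ q y * ∑ i, ent (s i y) := by
    intro y
    rcases Finset.eq_empty_or_nonempty (S y) with h | h
    · simp [hqdef, h]
    · exact mul_le_mul_of_nonneg_left (subadd (S y) h) (hq0 y)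
  -- Claim 3
  have claim3 : ∑ y, q y * Real.logb 2 ((S y).card : ℝ)
      = Real.logb 2 (D.card : ℝ) - ent q := by
    have per : ∀ y, q y * Real.logb 2 ((S y).card : ℝ)
        = q y * Real.logb 2 (D.card : ℝ) + q y * Real.logb 2 (q y) := by
      intro y
      rcases eq_or_ne (((S y).card : ℝ)) 0 with h | h
      · have : q y = 0 := by rw [hqdef]; simp [h]
        simp [this]
      · have hcy : ((S y).card : ℝ) = q y * (D.card : ℝ) := by
          rw [hqdef]; field_simp
        have hqy : q y ≠ 0 := by
          intro hq
          rw [hcy, hq, zero_mul] at h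
          exact h rfl
        rw [hcy, Real.logb_mul hqy hN.ne']
        ring
    rw [Finset.sum_congr rfl (fun y _ => per y), Finset.sum_add_distrib, ← Finset.sum_mul,
      hqsum, one_mul]
    have : ent q = -∑ y, q y * Real.logb 2 (q y) := by
      rw [ent, Finset.sum_neg_distrib]
    rw [this]
    ring
  -- Claim 4
  have claim4 : (n : ℝ) - t ≤ Real.logb 2 (D.card : ℝ) := by
    have hpow : ((2 : ℝ)) ^ (n - t) ≤ (D.card : ℝ) := by exact_mod_cast hD
    have h1 : Real.logb 2 ((2 : ℝ) ^ (n - t)) ≤ Real.logb 2 (D.card : ℝ) :=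
      Real.logb_le_logb_of_le one_lt_two (by positivity) hpow
    rw [Real.logb_pow, Real.logb_self_eq_one one_lt_two, mul_one] at h1
    have : ((n - t : ℕ) : ℝ) = (n : ℝ) - t := by
      rw [Nat.cast_sub ht]
    linarith [h1, this ▸ h1]
  -- entropy of each bit is at most 1
  have hentp : ∀ i : Fin n,
      ent (fun b : Bool => ((D.filter (fun x => x i = b)).card : ℝ) / D.card) ≤ 1 := by
    intro i
    apply ent_bool_le_one _ (fun b => by positivity)
    rw [← Finset.sum_div, fiber_card D (fun x => x i), div_self hN.ne']
  -- Assemble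
  have hIi : ∀ i, I i =
      ent (fun b : Bool => ((D.filter (fun x => x i = b)).card : ℝ) / D.card)
        - ∑ y, q y * ent (s i y) := by
    intro i
    rw [hI i, claim1 i]
    ring
  have hsplit : ∑ i : Fin n, I i =
      (∑ i : Fin n, ent (fun b : Bool => ((D.filter (fun x => x i = b)).card : ℝ) / D.card))
        - ∑ y, q y * ∑ i : Fin n, ent (s i y) := by
    rw [Finset.sum_congr rfl (fun i _ => hIi i), Finset.sum_sub_distrib]
    congr 1
    rw [Finset.sum_comm]
    exact Finset.sum_congr rfl fun y _ => by rw [Finset.mul_sum]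
  have hB : ∑ i : Fin n, ent (fun b : Bool => ((D.filter (fun x => x i = b)).card : ℝ) / D.card)
      ≤ (n : ℝ) := by
    calc _ ≤ ∑ _i : Fin n, (1 : ℝ) := Finset.sum_le_sum fun i _ => hentp i
      _ = (n : ℝ) := by simp
  have hC : ∑ y, q y * Real.logb 2 ((S y).card : ℝ) ≤ ∑ y, q y * ∑ i, ent (s i y) :=
    Finset.sum_le_sum fun y _ => claim2 y
  have first : ∑ i : Fin n, I i ≤ (t : ℝ) + 1 := by
    rw [hsplit]
    linarith [hB, hC, claim3, claim4, hentq]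
  refine ⟨first, ?_⟩
  have hn' : (0 : ℝ) < n := by exact_mod_cast hn
  calc (1 / (n : ℝ)) * ∑ i : Fin n, I i ≤ (1 / (n : ℝ)) * ((t : ℝ) + 1) :=
        mul_le_mul_of_nonneg_left first (by positivity)
    _ = ((t : ℝ) + 1) / n := by ring
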